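/- Let p be a positive integer, γ > 0, let g, h : ℝ^p → ℝ be convex, and let f : ℝ^p → ℝ be convex and L-smooth with L > 0. Let y* ∈ ℝ^p be a fixed point, i.e., there is x* ∈ ℝ^p such that x* is a proximal point of g at y* with parameter γ and x* is a proximal point of h at 2x* − y* − γ∇f(x*) with parameter γ (so the splitting step from y* is (x*, x*) and G(y*) = 0). Let y ∈ ℝ^p, let (x, z) be a three-operator splitting step from y, and set y⁺ = y − x + z and G(y) = (x − z)/γ. Then ‖y⁺ − y*‖² ≤ ‖y − y*‖² − γ²(1 − γL/2)·‖G(y)‖². -/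

import Mathlib

open RealInnerProductSpace

section Aux

variable {E : Type*} [NormedAddCommGroup E] [InnerProductSpace ℝ E] [CompleteSpace E]

lemma hasDerivAt_line (f : E → ℝ) (hd : Differentiable ℝ f) (a v : E) (t : ℝ) :
    HasDerivAt (fun s : ℝ => f (a + s • v)) ⟪gradient f (a + t • v), v⟫ t := by
  have hline : HasDerivAt (fun s : ℝ => a + s • v) v t := by
    simpa using ((hasDerivAt_id t).smul_const v).const_add a
  have hF : HasFDerivAt f (InnerProductSpace.toDual ℝ E (gradient f (a + t • v))) (a + t • v) :=
    hasGradientAt_iff_hasFDerivAt.mp (hd (a + t • v)).hasGradientAt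
  exact hF.comp_hasDerivAt t hline

lemma grad_ineq (f : E → ℝ) (hf : ConvexOn ℝ Set.univ f) (hd : Differentiable ℝ f) (a w : E) :
    f a + ⟪gradient f a, w - a⟫ ≤ f w := by
  set g : ℝ → ℝ := fun t => f (a + t • (w - a)) with hg
  have hconv : ConvexOn ℝ Set.univ g := by
    have := hf.comp_affineMap (AffineMap.lineMap a w)
    simp only [Set.preimage_univ] at this
    have e : g = f ∘ (AffineMap.lineMap a w : ℝ → E) := by
      funext t
      simp [hg, AffineMap.lineMap_apply, add_comm, vsub_eq_sub, vadd_eq_add]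
    rw [e]; exact this
  have hder : HasDerivAt g ⟪gradient f a, w - a⟫ 0 := by
    simpa using hasDerivAt_line f hd a (w - a) 0
  have := hconv.le_slope_of_hasDerivAt (Set.mem_univ 0) (Set.mem_univ 1) zero_lt_one hder
  rw [slope_def_field] at this
  have h0 : g 0 = f a := by simp [hg]
  have h1 : g 1 = f w := by simp [hg]
  simp only [h0, h1, sub_zero, div_one] at this
  linarith

lemma descent_lemma (f : E → ℝ) (hd : Differentiable ℝ f) {L : ℝ}
    (hlip : ∀ a b : E, ‖gradient f a - gradient f b‖ ≤ L * ‖a - b‖) (a w : E) :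
    f w ≤ f a + ⟪gradient f a, w - a⟫ + L / 2 * ‖w - a‖ ^ 2 := by
  set v := w - a with hv
  set φ : ℝ → ℝ := fun t => f (a + t • v) - t * ⟪gradient f a, v⟫ - L / 2 * t ^ 2 * ‖v‖ ^ 2
    with hφ
  have hφd : ∀ t : ℝ, HasDerivAt φ
      (⟪gradient f (a + t • v), v⟫ - ⟪gradient f a, v⟫ - L / 2 * (2 * t) * ‖v‖ ^ 2) t := by
    intro t
    have h1 := hasDerivAt_line f hd a v t
    have h2 : HasDerivAt (fun s : ℝ => s * ⟪gradient f a, v⟫) ⟪gradient f a, v⟫ t :=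
      hasDerivAt_mul_const _
    have h3 : HasDerivAt (fun s : ℝ => L / 2 * s ^ 2 * ‖v‖ ^ 2) (L / 2 * (2 * t) * ‖v‖ ^ 2) t := by
      have := ((hasDerivAt_pow 2 t).const_mul (L / 2)).mul_const (‖v‖ ^ 2)
      simpa [mul_comm, mul_assoc, mul_left_comm] using this
    exact (h1.sub h2).sub h3
  have hanti : AntitoneOn φ (Set.Icc (0 : ℝ) 1) := by
    apply antitoneOn_of_deriv_nonpos (convex_Icc 0 1)
    · exact (Differentiable.continuous (fun t => (hφd t).differentiableAt)).continuousOn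
    · exact fun t _ => ((hφd t).differentiableAt).differentiableWithinAt
    · intro t ht
      rw [interior_Icc] at ht
      rw [(hφd t).deriv]
      have h1 : ⟪gradient f (a + t • v), v⟫ - ⟪gradient f a, v⟫
          = ⟪gradient f (a + t • v) - gradient f a, v⟫ := (inner_sub_left _ _ _).symm
      have h2 := real_inner_le_norm (gradient f (a + t • v) - gradient f a) v
      have h3 := hlip (a + t • v) a
      have h4 : ‖a + t • v - a‖ = t * ‖v‖ := by
        simp [norm_smul, abs_of_pos ht.1]
      rw [h4] at h3
      have h5 := mul_le_mul_of_nonneg_right h3 (norm_nonneg v)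
      rw [h1]
      nlinarith [norm_nonneg v, norm_nonneg (gradient f (a + t • v) - gradient f a)]
  have hfin := hanti (Set.left_mem_Icc.mpr zero_le_one) (Set.right_mem_Icc.mpr zero_le_one)
    zero_le_one
  have h0 : φ 0 = f a := by simp [hφ]
  have h1 : φ 1 = f w - ⟪gradient f a, v⟫ - L / 2 * ‖v‖ ^ 2 := by
    simp [hφ, hv]
  rw [h0, h1] at hfin
  linarith

lemma improved_ineq (f : E → ℝ) (hf : ConvexOn ℝ Set.univ f) (hd : Differentiable ℝ f)
    {L : ℝ} (hL : 0 < L)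
    (hlip : ∀ a b : E, ‖gradient f a - gradient f b‖ ≤ L * ‖a - b‖) (a b : E) :
    f a + ⟪gradient f a, b - a⟫ + 1 / (2 * L) * ‖gradient f b - gradient f a‖ ^ 2 ≤ f b := by
  set Δ := gradient f b - gradient f a with hΔ
  set c := b - L⁻¹ • Δ with hc
  have h1 := grad_ineq f hf hd a c
  have h2 := descent_lemma f hd hlip b c
  have hca : c - a = (b - a) - L⁻¹ • Δ := by rw [hc]; abel
  have hcb : c - b = -(L⁻¹ • Δ) := by rw [hc]; abel
  have e1 : ⟪gradient f a, c - a⟫ = ⟪gradient f a, b - a⟫ - L⁻¹ * ⟪gradient f a, Δ⟫ := by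
    rw [hca, inner_sub_right, real_inner_smul_right]
  have e2 : ⟪gradient f b, c - b⟫ = -(L⁻¹ * ⟪gradient f b, Δ⟫) := by
    rw [hcb, inner_neg_right, real_inner_smul_right]
  have e3 : ‖c - b‖ ^ 2 = (L⁻¹) ^ 2 * ‖Δ‖ ^ 2 := by
    rw [hcb, norm_neg, norm_smul]
    simp [abs_of_pos (inv_pos.mpr hL), mul_pow]
  have e4 : ⟪gradient f b, Δ⟫ - ⟪gradient f a, Δ⟫ = ‖Δ‖ ^ 2 := by
    rw [← inner_sub_left, ← hΔ, real_inner_self_eq_norm_sq]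
  rw [e1] at h1
  rw [e2, e3] at h2
  have e5 : L / 2 * ((L⁻¹) ^ 2 * ‖Δ‖ ^ 2) = 1 / (2 * L) * ‖Δ‖ ^ 2 := by
    field_simp
  have e6 : L⁻¹ * ⟪gradient f b, Δ⟫ - L⁻¹ * ⟪gradient f a, Δ⟫ = L⁻¹ * ‖Δ‖ ^ 2 := by
    rw [← mul_sub, e4]
  have e7 : L⁻¹ * ‖Δ‖ ^ 2 = 2 * (1 / (2 * L) * ‖Δ‖ ^ 2) := by field_simp
  linarith

lemma cocoercive (f : E → ℝ) (hf : ConvexOn ℝ Set.univ f) (hd : Differentiable ℝ f)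
    {L : ℝ} (hL : 0 < L)
    (hlip : ∀ a b : E, ‖gradient f a - gradient f b‖ ≤ L * ‖a - b‖) (a b : E) :
    ‖gradient f a - gradient f b‖ ^ 2 ≤ L * ⟪gradient f a - gradient f b, a - b⟫ := by
  have h1 := improved_ineq f hf hd hL hlip a b
  have h2 := improved_ineq f hf hd hL hlip b a
  have e1 : ‖gradient f a - gradient f b‖ = ‖gradient f b - gradient f a‖ := norm_sub_rev _ _
  have e2 : ⟪gradient f a - gradient f b, a - b⟫
      = -(⟪gradient f a, b - a⟫ + ⟪gradient f b, a - b⟫) := by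
    rw [inner_sub_left]
    have : ⟪gradient f a, b - a⟫ = -⟪gradient f a, a - b⟫ := by
      rw [← inner_neg_right]; congr 1; abel
    rw [this]; ring
  rw [e1, e2]
  have key : ⟪gradient f a, b - a⟫ + ⟪gradient f b, a - b⟫
      ≤ -(2 * (1 / (2 * L) * ‖gradient f b - gradient f a‖ ^ 2)) := by
    rw [e1] at h2
    linarith
  have hmul := mul_le_mul_of_nonneg_left key hL.le
  have e3 : L * (2 * (1 / (2 * L) * ‖gradient f b - gradient f a‖ ^ 2))
      = ‖gradient f b - gradient f a‖ ^ 2 := by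
    field_simp
  nlinarith [hmul]

lemma key_alg (w a b d : E) {γ L : ℝ} (hγ : 0 < γ) (hL : 0 < L)
    (hA : 0 ≤ ⟪w - a, a⟫) (hB : 0 ≤ ⟪(2 : ℝ) • a - w - γ • d - b, b⟫)
    (hC : ‖d‖ ^ 2 ≤ L * ⟪d, a⟫) :
    ‖w - a + b‖ ^ 2 ≤ ‖w‖ ^ 2 - (1 - γ * L / 2) * ‖a - b‖ ^ 2 := by
  set s : ℝ := ‖a - b‖ with hs
  have hs0 : 0 ≤ s := norm_nonneg _
  have hw : ‖w - a + b‖ ^ 2 = ‖w‖ ^ 2 - 2 * (⟪w, a⟫ - ⟪w, b⟫) + s ^ 2 := by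
    have hv : w - a + b = w - (a - b) := by abel
    rw [hv, norm_sub_sq_real, inner_sub_right, hs]
  have hs2 : s ^ 2 = ‖a‖ ^ 2 - 2 * ⟪a, b⟫ + ‖b‖ ^ 2 := by
    rw [hs, norm_sub_sq_real]
  have hA' : ‖a‖ ^ 2 ≤ ⟪w, a⟫ := by
    rw [inner_sub_left, real_inner_self_eq_norm_sq] at hA
    linarith
  have hB' : ⟪w, b⟫ + ‖b‖ ^ 2 + γ * ⟪d, b⟫ ≤ 2 * ⟪a, b⟫ := by
    rw [inner_sub_left, inner_sub_left, inner_sub_left, real_inner_smul_left,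
      real_inner_smul_left, real_inner_self_eq_norm_sq] at hB
    linarith
  have hCS : ⟪d, a⟫ - ⟪d, b⟫ ≤ ‖d‖ * s := by
    have := real_inner_le_norm d (a - b)
    rwa [inner_sub_right, ← hs] at this
  -- γ*L*(⟪d,a⟫-⟪d,b⟫) ≤ γ*L*(‖d‖*s)
  have h1 : γ * L * (⟪d, a⟫ - ⟪d, b⟫) ≤ γ * L * (‖d‖ * s) :=
    mul_le_mul_of_nonneg_left hCS (by positivity)
  have h2 : 0 ≤ γ * ‖d‖ ^ 2 - γ * L * (‖d‖ * s) + γ * (L ^ 2 / 4) * s ^ 2 := by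
    nlinarith [mul_nonneg hγ.le (sq_nonneg (‖d‖ - L / 2 * s))]
  have h3 : γ * ‖d‖ ^ 2 ≤ γ * (L * ⟪d, a⟫) := mul_le_mul_of_nonneg_left hC hγ.le
  -- hence γ*L*⟪d,b⟫ ≥ -(γ*L^2/4)*s^2
  have h4 : -(γ * (L ^ 2 / 4) * s ^ 2) ≤ γ * L * ⟪d, b⟫ := by nlinarith [h1, h2, h3]
  -- multiply hA', hB' by L and combine
  have h5 : L * ‖a‖ ^ 2 ≤ L * ⟪w, a⟫ := mul_le_mul_of_nonneg_left hA' hL.le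
  have h6 : L * (⟪w, b⟫ + ‖b‖ ^ 2 + γ * ⟪d, b⟫) ≤ L * (2 * ⟪a, b⟫) :=
    mul_le_mul_of_nonneg_left hB' hL.le
  have h7 : 0 ≤ L * (2 * (⟪w, a⟫ - ⟪w, b⟫) - (2 - γ * L / 2) * s ^ 2) := by nlinarith
  have h8 : 0 ≤ 2 * (⟪w, a⟫ - ⟪w, b⟫) - (2 - γ * L / 2) * s ^ 2 :=
    (mul_nonneg_iff_of_pos_left hL).mp h7
  rw [hw]
  nlinarith [h8]

end Aux

/-- `x` is a proximal point of `φ` at `y` with parameter `γ`: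
it minimizes `u ↦ φ u + (1/(2γ)) ‖u - y‖²`. -/
def IsProxPt {p : ℕ} (γ : ℝ) (φ : EuclideanSpace ℝ (Fin p) → ℝ)
    (y x : EuclideanSpace ℝ (Fin p)) : Prop :=
  ∀ u : EuclideanSpace ℝ (Fin p),
    φ x + (1 / (2 * γ)) * ‖x - y‖ ^ 2 ≤ φ u + (1 / (2 * γ)) * ‖u - y‖ ^ 2

/-- `(x, z)` is a three-operator splitting step from `y`. -/
def IsSplitStep {p : ℕ} (γ : ℝ) (g h f : EuclideanSpace ℝ (Fin p) → ℝ)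
    (y x z : EuclideanSpace ℝ (Fin p)) : Prop :=
  IsProxPt γ g y x ∧ IsProxPt γ h ((2 : ℝ) • x - y - γ • gradient f x) z

/-- `f` is `L`-smooth: differentiable with `L`-Lipschitz gradient. -/
def LSmooth {p : ℕ} (L : ℝ) (f : EuclideanSpace ℝ (Fin p) → ℝ) : Prop :=
  Differentiable ℝ f ∧ ∀ a b : EuclideanSpace ℝ (Fin p),
    ‖gradient f a - gradient f b‖ ≤ L * ‖a - b‖

/-- `u` is a subgradient of `φ` at `x`. -/
def IsSubgradient {p : ℕ} (φ : EuclideanSpace ℝ (Fin p) → ℝ)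
    (x u : EuclideanSpace ℝ (Fin p)) : Prop :=
  ∀ w : EuclideanSpace ℝ (Fin p), φ w ≥ φ x + ⟪u, w - x⟫

lemma prox_subgrad {p : ℕ} {γ : ℝ} (hγ : 0 < γ) {φ : EuclideanSpace ℝ (Fin p) → ℝ}
    (hφ : ConvexOn ℝ Set.univ φ) {y x : EuclideanSpace ℝ (Fin p)}
    (hx : IsProxPt γ φ y x) : IsSubgradient φ x (γ⁻¹ • (y - x)) := by
  intro w
  rw [ge_iff_le, real_inner_smul_left]
  set q : ℝ := ‖w - x‖ ^ 2 with hq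
  have hq0 : 0 ≤ q := by positivity
  -- reduce to: ∀ ε > 0, LHS - ε ≤ φ w
  refine le_of_forall_sub_le fun ε hε => ?_
  set t : ℝ := min 1 (2 * γ * ε / (q + 1)) with htdef
  have ht0 : 0 < t := lt_min one_pos (by positivity)
  have ht1 : t ≤ 1 := min_le_left _ _
  have ht2 : t ≤ 2 * γ * ε / (q + 1) := min_le_right _ _
  -- convexity
  have hcvx : φ (x + t • (w - x)) ≤ (1 - t) * φ x + t * φ w := by
    have := hφ.2 (Set.mem_univ x) (Set.mem_univ w) (by linarith : (0:ℝ) ≤ 1 - t) ht0.le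
      (by ring)
    have hpt : (1 - t) • x + t • w = x + t • (w - x) := by
      rw [smul_sub, sub_smul, one_smul]; abel
    rwa [hpt] at this
  -- prox inequality at x + t • (w - x)
  have hprox := hx (x + t • (w - x))
  have hnorm : ‖x + t • (w - x) - y‖ ^ 2
      = ‖x - y‖ ^ 2 + 2 * (t * ⟪x - y, w - x⟫) + t ^ 2 * q := by
    have hv : x + t • (w - x) - y = (x - y) + t • (w - x) := by abel
    rw [hv, norm_add_sq_real, real_inner_smul_right, norm_smul]
    rw [hq]
    simp [abs_of_pos ht0, mul_pow]
  rw [hnorm] at hprox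
  set c : ℝ := 1 / (2 * γ) with hc
  have hcpos : 0 < c := by positivity
  set ip : ℝ := ⟪x - y, w - x⟫ with hip
  have hipy : ⟪y - x, w - x⟫ = -ip := by
    rw [hip, ← inner_neg_left, neg_sub]
  rw [hipy]
  have key2 : t * (φ x - 2 * c * ip) ≤ t * (φ w + t * c * q) := by
    nlinarith [hprox, hcvx]
  have key3 : φ x - 2 * c * ip ≤ φ w + t * c * q := le_of_mul_le_mul_left key2 ht0
  have h2c : γ⁻¹ = 2 * c := by rw [hc]; field_simp
  have htq : t * q ≤ 2 * γ * ε := by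
    have h1 : t * q ≤ 2 * γ * ε / (q + 1) * q := mul_le_mul_of_nonneg_right ht2 hq0
    have h2 : 2 * γ * ε / (q + 1) * q ≤ 2 * γ * ε := by
      rw [div_mul_eq_mul_div, div_le_iff₀ (by positivity)]
      nlinarith
    linarith
  have hfin : t * c * q ≤ ε := by
    have he : t * c * q = t * q * c := by ring
    rw [he]
    calc t * q * c ≤ 2 * γ * ε * c := mul_le_mul_of_nonneg_right htq hcpos.le
      _ = ε := by rw [hc]; field_simp
  rw [h2c]
  linarith

lemma subgrad_mono {p : ℕ} {φ : EuclideanSpace ℝ (Fin p) → ℝ}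
    {x x' u u' : EuclideanSpace ℝ (Fin p)}
    (h1 : IsSubgradient φ x u) (h2 : IsSubgradient φ x' u') :
    0 ≤ ⟪u - u', x - x'⟫ := by
  have ha := h1 x'
  have hb := h2 x
  have e : ⟪u, x' - x⟫ = -⟪u, x - x'⟫ := by
    rw [show x' - x = -(x - x') by abel, inner_neg_right]
  rw [e] at ha
  rw [inner_sub_left]
  linarith

/-- decreasing distance to a fixed point. -/
theorem stmt_3 (p : ℕ) (hp : 0 < p) (γ : ℝ) (hγ : 0 < γ) (L : ℝ) (hL : 0 < L)
    (g h f : EuclideanSpace ℝ (Fin p) → ℝ)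
    (hg : ConvexOn ℝ Set.univ g) (hh : ConvexOn ℝ Set.univ h)
    (hf : ConvexOn ℝ Set.univ f) (hfL : LSmooth L f)
    (ystar xstar : EuclideanSpace ℝ (Fin p))
    (hfix₁ : IsProxPt γ g ystar xstar)
    (hfix₂ : IsProxPt γ h ((2 : ℝ) • xstar - ystar - γ • gradient f xstar) xstar)
    (y x z yplus : EuclideanSpace ℝ (Fin p))
    (hstep : IsSplitStep γ g h f y x z)
    (hyplus : yplus = y - x + z) :
    ‖yplus - ystar‖ ^ 2 ≤
      ‖y - ystar‖ ^ 2 - γ ^ 2 * (1 - γ * L / 2) * ‖γ⁻¹ • (x - z)‖ ^ 2 := by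
  obtain ⟨hdf, hlip⟩ := hfL
  obtain ⟨hpx, hpz⟩ := hstep
  have hγ0 : γ ≠ 0 := ne_of_gt hγ
  have m1 := subgrad_mono (prox_subgrad hγ hg hpx) (prox_subgrad hγ hg hfix₁)
  have m2 := subgrad_mono (prox_subgrad hγ hh hpz) (prox_subgrad hγ hh hfix₂)
  have hA : 0 ≤ ⟪(y - ystar) - (x - xstar), x - xstar⟫ := by
    have ev : γ⁻¹ • (y - x) - γ⁻¹ • (ystar - xstar)
        = γ⁻¹ • ((y - ystar) - (x - xstar)) := by
      rw [← smul_sub]; congr 1; abel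
    rw [ev, real_inner_smul_left] at m1
    exact (mul_nonneg_iff_of_pos_left (inv_pos.mpr hγ)).mp m1
  have hB : 0 ≤ ⟪(2 : ℝ) • (x - xstar) - (y - ystar)
      - γ • (gradient f x - gradient f xstar) - (z - xstar), z - xstar⟫ := by
    have ev : γ⁻¹ • ((2 : ℝ) • x - y - γ • gradient f x - z)
        - γ⁻¹ • ((2 : ℝ) • xstar - ystar - γ • gradient f xstar - xstar)
        = γ⁻¹ • ((2 : ℝ) • (x - xstar) - (y - ystar)
            - γ • (gradient f x - gradient f xstar) - (z - xstar)) := by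
      rw [← smul_sub]; congr 1
      rw [smul_sub, smul_sub]; abel
    rw [ev, real_inner_smul_left] at m2
    exact (mul_nonneg_iff_of_pos_left (inv_pos.mpr hγ)).mp m2
  have hC : ‖gradient f x - gradient f xstar‖ ^ 2
      ≤ L * ⟪gradient f x - gradient f xstar, x - xstar⟫ :=
    cocoercive f hf hdf hL hlip x xstar
  have key := key_alg (y - ystar) (x - xstar) (z - xstar)
    (gradient f x - gradient f xstar) hγ hL hA hB hC
  have e1 : yplus - ystar = (y - ystar) - (x - xstar) + (z - xstar) := by
    rw [hyplus]; abel
  have e2 : ‖γ⁻¹ • (x - z)‖ ^ 2 = (γ⁻¹) ^ 2 * ‖(x - xstar) - (z - xstar)‖ ^ 2 := by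
    rw [show x - z = (x - xstar) - (z - xstar) by abel, norm_smul]
    simp [abs_of_pos (inv_pos.mpr hγ), mul_pow]
  rw [e1, e2]
  have e3 : γ ^ 2 * (1 - γ * L / 2) * ((γ⁻¹) ^ 2 * ‖(x - xstar) - (z - xstar)‖ ^ 2)
      = (1 - γ * L / 2) * ‖(x - xstar) - (z - xstar)‖ ^ 2 := by
    field_simp
  rw [e3]
  exact key
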